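/- For every α ∈ (0,1], every α-slack equilibrium assignment is equal-type envy-free: if (x*, p*) is an α-slack equilibrium and agents i and j are of equal type, then u_i(x*_j) ≤ u_i(x*_i). -/
import Mathlib


open Finset

noncomputable def dotO {O : Type*} [Fintype O] (p z : O → ℝ) : ℝ := ∑ l, p l * z l

noncomputable def dotIO {I O : Type*} [Fintype I] [Fintype O] (a x : I → O → ℝ) : ℝ :=
  ∑ i, ∑ l, a i l * x i l

noncomputable def pers {I O C : Type*} [Fintype C] (a : C → I → O → ℝ) (p : C → ℝ)
    (i : I) : O → ℝ :=
  fun l => ∑ c, a c i l * p c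

theorem statement6 {I O C : Type*} [Fintype I] [Fintype O] [Fintype C]
    (S : Finset (I → O → ℝ)) (hSne : S.Nonempty)
    (𝒞 : Set (I → O → ℝ)) (h𝒞 : 𝒞 = convexHull ℝ (S : Set (I → O → ℝ)))
    (h𝒞nn : ∀ x ∈ 𝒞, ∀ i l, 0 ≤ x i l)
    (X : I → Set (O → ℝ))
    (hXnn : ∀ i, ∀ z ∈ X i, ∀ l, 0 ≤ z l)
    (hXcpt : ∀ i, IsCompact (X i))
    (hXcvx : ∀ i, Convex ℝ (X i))
    (hX0 : ∀ i, (0 : O → ℝ) ∈ X i)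
    (hXdc : ∀ i, ∀ y z : O → ℝ, (∀ l, 0 ≤ y l) → (∀ l, y l ≤ z l) → z ∈ X i → y ∈ X i)
    (a : C → I → O → ℝ) (b : C → ℝ)
    (ha : ∀ c i l, 0 ≤ a c i l) (hb : ∀ c, 0 < b c)
    (hlcs : {x : I → O → ℝ | (∀ i l, 0 ≤ x i l) ∧ ∃ x' ∈ 𝒞, ∀ i l, x i l ≤ x' i l}
      = {x : I → O → ℝ | (∀ i l, 0 ≤ x i l) ∧ (∀ i, x i ∈ X i) ∧ ∀ c, dotIO (a c) x ≤ b c})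
    (u : I → (O → ℝ) → ℝ)
    (ω : I → O → ℝ) (hωX : ∀ i, ω i ∈ X i) (hω𝒞 : ω ∈ 𝒞)
    (α : ℝ) (hα0 : 0 < α) (hα1 : α ≤ 1)
    (x : I → O → ℝ) (p : C → ℝ)
    (hp : ∀ c, 0 ≤ p c)
    (hopt : ∀ i, x i ∈ X i ∧
      dotO (pers a p i) (x i) ≤ α + (1 - α) * dotO (pers a p i) (ω i) ∧
      ∀ z ∈ X i, dotO (pers a p i) z ≤ α + (1 - α) * dotO (pers a p i) (ω i) →
        u i z ≤ u i (x i))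
    (hfeas : x ∈ 𝒞)
    (hcs : ∀ c, dotIO (a c) x < b c → p c = 0)
    (i j : I) (hωij : ω i = ω j) (hXij : X i = X j) (haij : ∀ c, a c i = a c j) :
    u i (x j) ≤ u i (x i) := by
  have hpers : pers a p i = pers a p j := by
    funext l
    simp only [pers, haij]
  obtain ⟨hxX, hxb, _⟩ := hopt j
  exact (hopt i).2.2 (x j) (hXij ▸ hxX) (by rw [hpers, hωij]; exact hxb)
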